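/- For every Schwartz function f : ℝ → ℂ and every x ∈ ℝ, one has ∫₀¹ Wf(x,y) e^{−πixy} dy = f(x); that is, the map g ↦ (x ↦ ∫₀¹ g(x,y) e^{−πixy} dy) is a left inverse of the Weil–Gel'fand–Zak transform W. -/

import Mathlib

open Complex

/-- The Weil–Gel'fand–Zak transform `Wf(x,y) = e^{πixy} Σ_{m∈ℤ} f(x+m) e^{2πimy}`. -/
noncomputable def wgz (f : ℝ → ℂ) : ℝ × ℝ → ℂ :=
  fun p =>
    Complex.exp (Real.pi * Complex.I * (p.1 : ℂ) * (p.2 : ℂ)) *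
      ∑' m : ℤ, f (p.1 + m) * Complex.exp (2 * Real.pi * Complex.I * (m : ℂ) * (p.2 : ℂ))

lemma wgz_aux_summable (f : SchwartzMap ℝ ℂ) (x : ℝ) :
    Summable fun m : ℤ => ‖f (x + m)‖ := by
  have hO : (fun t : ℝ => f t) =O[Filter.cocompact ℝ] fun t : ℝ => |t| ^ (-2 : ℝ) :=
    f.isBigO_cocompact_rpow (-2)
  have htend : Filter.Tendsto (fun m : ℤ => x + (m : ℝ)) Filter.cofinite (Filter.cocompact ℝ) := by
    have h1 : Filter.Tendsto ((↑) : ℤ → ℝ) Filter.cofinite (Filter.cocompact ℝ) :=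
      Int.tendsto_coe_cofinite
    have h2 : Filter.Tendsto (fun t : ℝ => x + t) (Filter.cocompact ℝ) (Filter.cocompact ℝ) :=
      by
      conv_rhs => rw [← (Homeomorph.addLeft x).map_cocompact]
      exact Filter.tendsto_map
    exact h2.comp h1
  have hO2 : (fun m : ℤ => f (x + m)) =O[Filter.cofinite]
      fun m : ℤ => |x + (m : ℝ)| ^ (-2 : ℝ) := hO.comp_tendsto htend
  have hs : Summable fun m : ℤ => |x + (m : ℝ)| ^ (-2 : ℝ) := by
    have := (Real.summable_one_div_int_add_rpow x 2).mpr one_lt_two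
    refine this.congr fun m => ?_
    rw [Real.rpow_neg (abs_nonneg _), one_div, add_comm]
  simpa using summable_of_isBigO hs hO2.norm_left

/-- For every Schwartz function `f` and every `x ∈ ℝ`,
`∫₀¹ Wf(x,y) e^{−πixy} dy = f(x)`; that is,
`g ↦ (x ↦ ∫₀¹ g(x,y) e^{−πixy} dy)` is a left inverse of the WGZ transform. -/
theorem wgz_left_inverse (f : SchwartzMap ℝ ℂ) :
    ∀ x : ℝ,
      (∫ y in (0 : ℝ)..1,
        wgz f (x, y) * Complex.exp (-(Real.pi * Complex.I * (x : ℂ) * (y : ℂ)))) = f x := by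
  intro x
  have hnorm : ∀ (m : ℤ) (y : ℝ),
      ‖f (x + m) * Complex.exp (2 * Real.pi * Complex.I * (m : ℂ) * (y : ℂ))‖ = ‖f (x + m)‖ := by
    intro m y
    rw [norm_mul, Complex.norm_exp]
    have : (2 * (Real.pi : ℂ) * Complex.I * (m : ℂ) * (y : ℂ)).re = 0 := by
      simp [Complex.mul_re, Complex.mul_im]
    rw [this, Real.exp_zero, mul_one]
  have hsum := wgz_aux_summable f x
  have hint : ∀ m : ℤ, MeasureTheory.Integrable
      (fun y : ℝ => f (x + m) * Complex.exp (2 * Real.pi * Complex.I * (m : ℂ) * (y : ℂ)))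
      (MeasureTheory.volume.restrict (Set.Ioc (0 : ℝ) 1)) := by
    intro m
    apply Continuous.integrableOn_Ioc
    exact continuous_const.mul (Complex.continuous_exp.comp (by continuity))
  have step1 : (∫ y in (0 : ℝ)..1,
        wgz f (x, y) * Complex.exp (-(Real.pi * Complex.I * (x : ℂ) * (y : ℂ))))
      = ∫ y in (0 : ℝ)..1,
        ∑' m : ℤ, f (x + m) * Complex.exp (2 * Real.pi * Complex.I * (m : ℂ) * (y : ℂ)) := by
    apply intervalIntegral.integral_congr
    intro y _
    simp only [wgz]
    rw [mul_comm, ← mul_assoc, ← Complex.exp_add, neg_add_cancel, Complex.exp_zero, one_mul]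
  have step2 : (∫ y in (0 : ℝ)..1,
        ∑' m : ℤ, f (x + m) * Complex.exp (2 * Real.pi * Complex.I * (m : ℂ) * (y : ℂ)))
      = ∑' m : ℤ, ∫ y in (0 : ℝ)..1,
          f (x + m) * Complex.exp (2 * Real.pi * Complex.I * (m : ℂ) * (y : ℂ)) := by
    rw [intervalIntegral.integral_of_le zero_le_one]
    rw [← MeasureTheory.integral_tsum_of_summable_integral_norm hint ?_]
    · refine tsum_congr fun m => ?_
      rw [intervalIntegral.integral_of_le zero_le_one]
    · refine hsum.congr fun m => ?_
      simp_rw [hnorm m]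
      rw [MeasureTheory.integral_const]
      simp
  have step3 : ∀ m : ℤ, m ≠ 0 → (∫ y in (0 : ℝ)..1,
      f (x + m) * Complex.exp (2 * Real.pi * Complex.I * (m : ℂ) * (y : ℝ))) = 0 := by
    intro m hm
    rw [intervalIntegral.integral_const_mul]
    have hc : (2 * (Real.pi : ℂ) * Complex.I * (m : ℂ)) ≠ 0 := by
      simp [Real.pi_ne_zero, Complex.I_ne_zero, hm]
    have heq : ∀ y : ℝ, Complex.exp (2 * Real.pi * Complex.I * (m : ℂ) * (y : ℂ))
        = Complex.exp ((2 * Real.pi * Complex.I * (m : ℂ)) * (y : ℂ)) := fun y => rfl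
    rw [integral_exp_mul_complex hc]
    have h1 : Complex.exp (2 * (Real.pi : ℂ) * Complex.I * (m : ℂ) * ((1 : ℝ) : ℂ)) = 1 := by
      push_cast
      rw [mul_one]
      have := Complex.exp_int_mul_two_pi_mul_I m
      rw [← this]
      ring_nf
    have h0 : Complex.exp (2 * (Real.pi : ℂ) * Complex.I * (m : ℂ) * ((0 : ℝ) : ℂ)) = 1 := by
      push_cast
      rw [mul_zero, Complex.exp_zero]
    rw [h1, h0, sub_self, zero_div, mul_zero]
  rw [step1, step2, tsum_eq_single 0 step3]
  push_cast
  simp [Complex.exp_zero]
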